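/- Let α ∈ ℝ and let A be the algebraic curvature tensor on V whose nonvanishing components relative to the standard basis (up to the curvature symmetries) are A₁₂₂₁ = A₄₃₃₄ = α, A₁₃₃₁ = A₄₂₂₄ = −α, A₁₄₄₁ = A₃₂₂₃ = −α, A₂₁₁₄ = A₂₃₃₄ = −√2/2, A₃₁₁₄ = −A₃₂₂₄ = √2/2, A₁₂₂₃ = A₁₄₄₃ = A₁₃₃₂ = −A₁₄₄₂ = √2/2 (a Type III spacelike Osserman tensor). Then for the null vectors u = e₂ − e₃ and v = e₂ + e₃ one has rank(J_A(u)) = 2 and rank(J_A(v)) ≤ 1; hence the model 𝔐 = (V,⟨·,·⟩,A) is not null Jordan Osserman. -/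

import Mathlib

open Matrix BigOperators

/-- `V = ℝ⁴`. -/
abbrev V4 : Type := Fin 4 → ℝ

/-- The neutral inner product of signature (2,2):
`⟨x,y⟩ = −x₁y₁ − x₂y₂ + x₃y₃ + x₄y₄`. -/
def nip (x y : V4) : ℝ := -(x 0 * y 0) - x 1 * y 1 + x 2 * y 2 + x 3 * y 3

/-- The signs `ε₁ = ε₂ = −1`, `ε₃ = ε₄ = 1`. -/
def eps : Fin 4 → ℝ := ![-1, -1, 1, 1]

/-- The standard basis vectors `e i`. -/
def stdb (i : Fin 4) : V4 := fun j => if j = i then 1 else 0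

/-- A 4-linear map `A : V⁴ → ℝ` (linearity in each slot). -/
def IsMultilinear (A : V4 → V4 → V4 → V4 → ℝ) : Prop :=
  (∀ (c : ℝ) (x x' y z w : V4), A (c • x + x') y z w = c * A x y z w + A x' y z w) ∧
  (∀ (c : ℝ) (x y y' z w : V4), A x (c • y + y') z w = c * A x y z w + A x y' z w) ∧
  (∀ (c : ℝ) (x y z z' w : V4), A x y (c • z + z') w = c * A x y z w + A x y z' w) ∧
  (∀ (c : ℝ) (x y z w w' : V4), A x y z (c • w + w') = c * A x y z w + A x y z w')

/-- Curvature symmetries: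
`A(x,y,z,v) = −A(y,x,z,v) = A(z,v,x,y)` and the first Bianchi identity. -/
def HasCurvSym (A : V4 → V4 → V4 → V4 → ℝ) : Prop :=
  (∀ x y z w, A x y z w = - A y x z w) ∧
  (∀ x y z w, A x y z w = A z w x y) ∧
  (∀ x y z w, A x y z w + A y z x w + A z x y w = 0)

/-- An algebraic curvature tensor on `(V,⟨·,·⟩)`. -/
def IsModel (A : V4 → V4 → V4 → V4 → ℝ) : Prop := IsMultilinear A ∧ HasCurvSym A

/-- The Jacobi operator `J_A(x)`, as a matrix: it is the unique linear map with
`⟨J_A(x)y, z⟩ = A(y,x,x,z)`; its matrix entries are `J i j = ε i * A(e j, x, x, e i)`. -/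
def jacobi (A : V4 → V4 → V4 → V4 → ℝ) (x : V4) : Matrix (Fin 4) (Fin 4) ℝ :=
  Matrix.of fun i j => eps i * A (stdb j) x x (stdb i)

/-- Two endomorphisms of `V` are similar (conjugate by an invertible linear map). -/
def SimilarM (M N : Matrix (Fin 4) (Fin 4) ℝ) : Prop :=
  ∃ L : Matrix (Fin 4) (Fin 4) ℝ, IsUnit L.det ∧ M * L = L * N

/-- Spacelike Osserman: the characteristic polynomial of `J_A` is constant on
unit spacelike vectors. -/
def SpacelikeOsserman (A : V4 → V4 → V4 → V4 → ℝ) : Prop :=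
  ∀ u w : V4, nip u u = 1 → nip w w = 1 → (jacobi A u).charpoly = (jacobi A w).charpoly

/-- Timelike Osserman: the characteristic polynomial of `J_A` is constant on
unit timelike vectors. -/
def TimelikeOsserman (A : V4 → V4 → V4 → V4 → ℝ) : Prop :=
  ∀ u w : V4, nip u u = -1 → nip w w = -1 → (jacobi A u).charpoly = (jacobi A w).charpoly

/-- Null Osserman: `J_A(v)` is nilpotent for every null vector `v`. -/
def NullOsserman (A : V4 → V4 → V4 → V4 → ℝ) : Prop :=
  ∀ v : V4, nip v v = 0 → IsNilpotent (jacobi A v)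

/-- Spacelike Jordan Osserman: the Jordan normal form of `J_A` is constant on
unit spacelike vectors. -/
def SpacelikeJordanOsserman (A : V4 → V4 → V4 → V4 → ℝ) : Prop :=
  ∀ u w : V4, nip u u = 1 → nip w w = 1 → SimilarM (jacobi A u) (jacobi A w)

/-- Timelike Jordan Osserman. -/
def TimelikeJordanOsserman (A : V4 → V4 → V4 → V4 → ℝ) : Prop :=
  ∀ u w : V4, nip u u = -1 → nip w w = -1 → SimilarM (jacobi A u) (jacobi A w)

/-- Null Jordan Osserman: the Jordan normal form of `J_A` is constant on
nonzero null vectors. -/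
def NullJordanOsserman (A : V4 → V4 → V4 → V4 → ℝ) : Prop :=
  ∀ u w : V4, u ≠ 0 → w ≠ 0 → nip u u = 0 → nip w w = 0 →
    SimilarM (jacobi A u) (jacobi A w)

/-- The Ricci tensor `ρ_A(x,y) = Σᵢ εᵢ A(eᵢ,x,y,eᵢ)`. -/
def ricci (A : V4 → V4 → V4 → V4 → ℝ) (x y : V4) : ℝ :=
  ∑ i : Fin 4, eps i * A (stdb i) x y (stdb i)

/-- Einstein: `ρ_A = c⟨·,·⟩`. -/
def Einstein (A : V4 → V4 → V4 → V4 → ℝ) : Prop :=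
  ∃ c : ℝ, ∀ x y : V4, ricci A x y = c * nip x y

/-- The scalar curvature `τ_A = Σᵢ εᵢ ρ_A(eᵢ,eᵢ)`. -/
def scal (A : V4 → V4 → V4 → V4 → ℝ) : ℝ :=
  ∑ i : Fin 4, eps i * ricci A (stdb i) (stdb i)

/-- The Weyl tensor. -/
noncomputable def weyl (A : V4 → V4 → V4 → V4 → ℝ) (x y z v : V4) : ℝ :=
  A x y z v + (scal A / 6) * (nip y z * nip x v - nip x z * nip y v)
    - (1/2) * (ricci A y z * nip x v - ricci A x z * nip y v
        + ricci A x v * nip y z - ricci A y v * nip x z)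

/-- A 2-vector `x ∧ y`, represented by its antisymmetric coefficient matrix. -/
def wedge (x y : V4) : Matrix (Fin 4) (Fin 4) ℝ :=
  Matrix.of fun i j => x i * y j - x j * y i

/-- The Weyl tensor as a symmetric bilinear form on 2-vectors, determined by
`W_A(x∧y, z∧v) = W_A(x,y,z,v)`. -/
noncomputable def weylForm (A : V4 → V4 → V4 → V4 → ℝ) (α β : Matrix (Fin 4) (Fin 4) ℝ) : ℝ :=
  (1/4) * ∑ i : Fin 4, ∑ j : Fin 4, ∑ k : Fin 4, ∑ l : Fin 4,
    α i j * β k l * weyl A (stdb i) (stdb j) (stdb k) (stdb l)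

/-- `E₁^ε = (1/√2)(e₁∧e₂ + ε e₃∧e₄)`, `E₂^ε = (1/√2)(e₁∧e₃ + ε e₂∧e₄)`,
`E₃^ε = (1/√2)(e₁∧e₄ − ε e₂∧e₃)`.  For `ε = 1` this is the standard basis of the
self-dual 2-vectors `Λ⁺`; for `ε = −1`, of the anti-self-dual 2-vectors `Λ⁻`. -/
noncomputable def Evec (ε : ℝ) : Fin 3 → Matrix (Fin 4) (Fin 4) ℝ :=
  ![(Real.sqrt 2)⁻¹ • (wedge (stdb 0) (stdb 1) + ε • wedge (stdb 2) (stdb 3)),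
    (Real.sqrt 2)⁻¹ • (wedge (stdb 0) (stdb 2) + ε • wedge (stdb 1) (stdb 3)),
    (Real.sqrt 2)⁻¹ • (wedge (stdb 0) (stdb 3) - ε • wedge (stdb 1) (stdb 2))]

/-- The space `Λ⁺` of self-dual 2-vectors. -/
def LambdaPlus : Submodule ℝ (Matrix (Fin 4) (Fin 4) ℝ) :=
  Submodule.span ℝ (Set.range (Evec 1))

/-- The space `Λ⁻` of anti-self-dual 2-vectors. -/
def LambdaMinus : Submodule ℝ (Matrix (Fin 4) (Fin 4) ℝ) :=
  Submodule.span ℝ (Set.range (Evec (-1)))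

/-- Self-dual: the Weyl form vanishes identically on `Λ⁻`. -/
def SelfDual (A : V4 → V4 → V4 → V4 → ℝ) : Prop :=
  ∀ α ∈ LambdaMinus, ∀ β ∈ LambdaMinus, weylForm A α β = 0

/-- Anti-self-dual: the Weyl form vanishes identically on `Λ⁺`. -/
def AntiSelfDual (A : V4 → V4 → V4 → V4 → ℝ) : Prop :=
  ∀ α ∈ LambdaPlus, ∀ β ∈ LambdaPlus, weylForm A α β = 0

/-- The curvature tensor `A⁰` of constant sectional curvature `+1`. -/
def Acurv0 (x y z v : V4) : ℝ := nip y z * nip x v - nip x z * nip y v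

/-- The curvature tensor `A^Ψ` of a skew-adjoint endomorphism `Ψ`. -/
def AcurvPsi (Ψ : Matrix (Fin 4) (Fin 4) ℝ) (x y z v : V4) : ℝ :=
  nip (Ψ.mulVec y) z * nip (Ψ.mulVec x) v - nip (Ψ.mulVec x) z * nip (Ψ.mulVec y) v
    - 2 * nip (Ψ.mulVec x) y * nip (Ψ.mulVec z) v

/-- Skew-adjoint with respect to the neutral inner product. -/
def SkewAdjointM (Ψ : Matrix (Fin 4) (Fin 4) ℝ) : Prop :=
  ∀ x y : V4, nip (Ψ.mulVec x) y = - nip x (Ψ.mulVec y)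

/-- An orthogonal complex structure: skew-adjoint with `J² = −id`. -/
def OrthComplexStructure (J : Matrix (Fin 4) (Fin 4) ℝ) : Prop :=
  SkewAdjointM J ∧ J * J = -1

/-- An adapted paracomplex structure: skew-adjoint with `P² = id`. -/
def AdaptedParaStructure (P : Matrix (Fin 4) (Fin 4) ℝ) : Prop :=
  SkewAdjointM P ∧ P * P = 1

/-- A paraquaternionic structure. -/
def Paraquaternionic (P₁ P₂ P₃ : Matrix (Fin 4) (Fin 4) ℝ) : Prop :=
  SkewAdjointM P₁ ∧ SkewAdjointM P₂ ∧ SkewAdjointM P₃ ∧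
  P₁ * P₁ = -1 ∧ P₂ * P₂ = 1 ∧ P₃ * P₃ = 1 ∧
  P₁ * P₂ + P₂ * P₁ = 0 ∧ P₁ * P₃ + P₃ * P₁ = 0 ∧ P₂ * P₃ + P₃ * P₂ = 0

/-- The standard paraquaternionic structure: `Ψ₁`. -/
def psi1 : Matrix (Fin 4) (Fin 4) ℝ :=
  !![0, 1, 0, 0; -1, 0, 0, 0; 0, 0, 0, -1; 0, 0, 1, 0]

/-- The standard paraquaternionic structure: `Ψ₂`. -/
def psi2 : Matrix (Fin 4) (Fin 4) ℝ :=
  !![0, 0, 1, 0; 0, 0, 0, 1; 1, 0, 0, 0; 0, 1, 0, 0]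

/-- The standard paraquaternionic structure: `Ψ₃`. -/
def psi3 : Matrix (Fin 4) (Fin 4) ℝ :=
  !![0, 0, 0, 1; 0, 0, -1, 0; 0, -1, 0, 0; 1, 0, 0, 0]

/-- The curvature tensor `A_{κ₀,ξ}` of the Gilkey–Ivanova ansatz. -/
noncomputable def AKxi (κ₀ ξ11 ξ12 ξ13 ξ22 ξ23 ξ33 : ℝ) : V4 → V4 → V4 → V4 → ℝ :=
  fun x y z w =>
    κ₀ * Acurv0 x y z w + (1/3) *
      (ξ11 * AcurvPsi psi1 x y z w + ξ22 * AcurvPsi psi2 x y z w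
        + ξ33 * AcurvPsi psi3 x y z w + ξ12 * AcurvPsi (psi1 + psi2) x y z w
        + ξ13 * AcurvPsi (psi1 + psi3) x y z w + ξ23 * AcurvPsi (psi2 + psi3) x y z w)

/-- The `3 × 3` matrix `𝒥_{κ₀,ξ}`. -/
def Jmat (κ₀ ξ11 ξ12 ξ13 ξ22 ξ23 ξ33 : ℝ) : Matrix (Fin 3) (Fin 3) ℝ :=
  κ₀ • (1 : Matrix (Fin 3) (Fin 3) ℝ) +
    !![ξ11 + ξ12 + ξ13, -ξ12, -ξ13;
       ξ12, -ξ22 - ξ12 - ξ23, -ξ23;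
       ξ13, -ξ23, -ξ33 - ξ13 - ξ23]

/-- An oriented orthonormal basis of `(V,⟨·,·⟩)`: `b₁, b₂` timelike, `b₃, b₄` spacelike,
mutually orthogonal, with positively-oriented change-of-basis matrix. -/
def OrientedONB (b : Fin 4 → V4) : Prop :=
  (∀ i j : Fin 4, nip (b i) (b j) = if i = j then eps i else 0) ∧
  0 < (Matrix.of fun i j : Fin 4 => b j i).det


/-- Component tensor of the Type III example. -/
noncomputable def TypeIIIComp (α s2 : ℝ) : Fin 4 → Fin 4 → Fin 4 → Fin 4 → ℝ := fun i j k l =>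
  ![
    ![
      !![0, 0, 0, 0;
         0, 0, 0, 0;
         0, 0, 0, 0;
         0, 0, 0, 0],
      !![0, -α, 0, s2;
         α, 0, s2, 0;
         0, -s2, 0, 0;
         -s2, 0, 0, 0],
      !![0, 0, α, -s2;
         0, 0, -s2, 0;
         -α, s2, 0, 0;
         s2, 0, 0, 0],
      !![0, s2, -s2, α;
         -s2, 0, 0, s2;
         s2, 0, 0, -s2;
         -α, -s2, s2, 0]
    ],
    ![
      !![0, α, 0, -s2;
         -α, 0, -s2, 0;
         0, s2, 0, 0;
         s2, 0, 0, 0],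
      !![0, 0, 0, 0;
         0, 0, 0, 0;
         0, 0, 0, 0;
         0, 0, 0, 0],
      !![0, s2, -s2, 0;
         -s2, 0, α, s2;
         s2, -α, 0, -s2;
         0, -s2, s2, 0],
      !![0, 0, 0, s2;
         0, 0, s2, α;
         0, -s2, 0, 0;
         -s2, -α, 0, 0]
    ],
    ![
      !![0, 0, -α, s2;
         0, 0, s2, 0;
         α, -s2, 0, 0;
         -s2, 0, 0, 0],
      !![0, -s2, s2, 0;
         s2, 0, -α, -s2;
         -s2, α, 0, s2;
         0, s2, -s2, 0],
      !![0, 0, 0, 0;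
         0, 0, 0, 0;
         0, 0, 0, 0;
         0, 0, 0, 0],
      !![0, 0, 0, -s2;
         0, 0, -s2, 0;
         0, s2, 0, -α;
         s2, 0, α, 0]
    ],
    ![
      !![0, -s2, s2, -α;
         s2, 0, 0, -s2;
         -s2, 0, 0, s2;
         α, s2, -s2, 0],
      !![0, 0, 0, -s2;
         0, 0, -s2, -α;
         0, s2, 0, 0;
         s2, α, 0, 0],
      !![0, 0, 0, s2;
         0, 0, s2, 0;
         0, -s2, 0, α;
         -s2, 0, -α, 0],
      !![0, 0, 0, 0;
         0, 0, 0, 0;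
         0, 0, 0, 0;
         0, 0, 0, 0]
    ]
  ] i j k l

section MyAux

open Matrix

private noncomputable def q : ℝ := Real.sqrt 2 / 2

private lemma hq0 : q ≠ 0 := by
  have : (0:ℝ) < Real.sqrt 2 / 2 := by positivity
  simpa [q] using this.ne'

/-- The Jacobi matrix of `u = e₂ - e₃`. -/
private noncomputable def Mu (α : ℝ) : Matrix (Fin 4) (Fin 4) ℝ :=
  !![0, -(2*q), -(2*q), 0;
     -(2*q), α, α, 2*q;
     2*q, -α, -α, -(2*q);
     0, -(2*q), -(2*q), 0]

/-- The Jacobi matrix of `v = e₂ + e₃`. -/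
private noncomputable def Mv (α : ℝ) : Matrix (Fin 4) (Fin 4) ℝ :=
  !![0, 0, 0, 0;
     0, α, -α, 0;
     0, α, -α, 0;
     0, 0, 0, 0]

private lemma rank_Mu (α : ℝ) : (Mu α).rank = 2 := by
  -- upper bound: Mu = B * C
  have hub : (Mu α).rank ≤ 2 := by
    have hfac : Mu α =
        (!![1,0; 0,1; 0,-1; 1,0] : Matrix (Fin 4) (Fin 2) ℝ) *
        (!![0, -(2*q), -(2*q), 0; -(2*q), α, α, 2*q] : Matrix (Fin 2) (Fin 4) ℝ) := by
      ext i j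
      fin_cases i <;> fin_cases j <;>
        simp [Mu, Matrix.mul_apply, Fin.sum_univ_two] <;> ring
    calc (Mu α).rank ≤ (!![1,0; 0,1; 0,-1; 1,0] : Matrix (Fin 4) (Fin 2) ℝ).rank := by
          rw [hfac]; exact Matrix.rank_mul_le_left _ _
      _ ≤ 2 := by simpa using (!![1,0; 0,1; 0,-1; 1,0] : Matrix (Fin 4) (Fin 2) ℝ).rank_le_card_width
  -- lower bound via two independent columns
  have hc0 : (Mu α).mulVec ![1,0,0,0] = ![0, -(2*q), 2*q, 0] := by
    funext i; fin_cases i <;>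
      simp [Mu, Matrix.mulVec, dotProduct, Fin.sum_univ_four]
  have hc1 : (Mu α).mulVec ![0,1,0,0] = ![-(2*q), α, -α, -(2*q)] := by
    funext i; fin_cases i <;>
      simp [Mu, Matrix.mulVec, dotProduct, Fin.sum_univ_four]
  have li : LinearIndependent ℝ ![(![0, -(2*q), 2*q, 0] : V4), ![-(2*q), α, -α, -(2*q)]] := by
    rw [LinearIndependent.pair_iff]
    intro s t hst
    have h0 := congrFun hst 0
    have h1 := congrFun hst 1
    simp at h0 h1
    have ht : t = 0 := by
      rcases h0 with h | h
      · exact h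
      · exact absurd h hq0
    subst ht
    refine ⟨?_, rfl⟩
    simp at h1
    rcases h1 with h | h
    · exact h
    · exact absurd h hq0
  have hsub : Submodule.span ℝ
      (Set.range ![(![0, -(2*q), 2*q, 0] : V4), ![-(2*q), α, -α, -(2*q)]]) ≤
      LinearMap.range (Mu α).mulVecLin := by
    rw [Submodule.span_le]
    rintro x ⟨i, rfl⟩
    fin_cases i
    · exact ⟨![1,0,0,0], by simpa [Matrix.mulVecLin_apply] using hc0⟩
    · exact ⟨![0,1,0,0], by simpa [Matrix.mulVecLin_apply] using hc1⟩
  have hlb : 2 ≤ (Mu α).rank := by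
    have := Submodule.finrank_mono hsub
    rwa [finrank_span_eq_card li, Fintype.card_fin] at this
  omega

private lemma rank_Mv (α : ℝ) : (Mv α).rank ≤ 1 := by
  have hfac : Mv α =
      (Matrix.of (fun i (_ : Fin 1) => (![0,α,α,0] : V4) i)) *
      (Matrix.of (fun (_ : Fin 1) j => (![0,1,-1,0] : V4) j)) := by
    ext i j
    fin_cases i <;> fin_cases j <;>
      simp [Mv, Matrix.mul_apply, Matrix.vecHead, Matrix.vecTail] <;> ring
  calc (Mv α).rank ≤ (Matrix.of (fun i (_ : Fin 1) => (![0,α,α,0] : V4) i)).rank := by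
        rw [hfac]; exact Matrix.rank_mul_le_left _ _
    _ ≤ 1 := by
        simpa using (Matrix.of (fun i (_ : Fin 1) => (![0,α,α,0] : V4) i)).rank_le_card_width

end MyAux

/-- Section 3.8: a Type III spacelike Osserman model of signature (2,2), given by its
components `TypeIIIComp α (√2/2)` relative to the standard basis, is not null Jordan
Osserman: for the null vectors `u = e₂ − e₃` and `v = e₂ + e₃` one has
`rank J_A(u) = 2` and `rank J_A(v) ≤ 1`. -/
theorem type_III_not_null_jordan_osserman (α : ℝ)
    (A : V4 → V4 → V4 → V4 → ℝ) (hA : IsModel A)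
    (hcomp : ∀ i j k l : Fin 4,
      A (stdb i) (stdb j) (stdb k) (stdb l)
        = TypeIIIComp α (Real.sqrt 2 / 2) i j k l) :
    (jacobi A (stdb 1 - stdb 2)).rank = 2 ∧
    (jacobi A (stdb 1 + stdb 2)).rank ≤ 1 ∧
    ¬ NullJordanOsserman A := by
  obtain ⟨⟨m1, m2, m3, m4⟩, hsym⟩ := hA
  set s2 : ℝ := Real.sqrt 2 / 2 with hs2
  -- expansion of the Jacobi argument
  have hvec : ∀ c : ℝ, stdb 1 + c • stdb 2 = c • stdb 2 + stdb 1 := fun c => by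
    funext k; simp [add_comm]
  have e1 : ∀ (c : ℝ) (x w : V4),
      A x (c • stdb 2 + stdb 1) (c • stdb 2 + stdb 1) w
        = c * (c * A x (stdb 2) (stdb 2) w + A x (stdb 2) (stdb 1) w)
          + (c * A x (stdb 1) (stdb 2) w + A x (stdb 1) (stdb 1) w) := by
    intro c x w
    rw [m2, m3, m3]
  have hsubeq : stdb 1 - stdb 2 = (-1 : ℝ) • stdb 2 + stdb 1 := by
    funext k; simp [sub_eq_add_neg, add_comm]
  have haddeq : stdb 1 + stdb 2 = (1 : ℝ) • stdb 2 + stdb 1 := by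
    funext k; simp [add_comm]
  have hJu : jacobi A (stdb 1 - stdb 2) = Mu α := by
    ext i j
    show eps i * A (stdb j) (stdb 1 - stdb 2) (stdb 1 - stdb 2) (stdb i) = Mu α i j
    rw [hsubeq, e1, hcomp, hcomp, hcomp, hcomp]
    fin_cases i <;> fin_cases j <;>
      simp only [Fin.zero_eta, Fin.reduceFinMk, Fin.isValue] <;>
      simp only [TypeIIIComp, eps, Mu, q, ← hs2, Matrix.of_apply, Matrix.cons_val, Fin.isValue] <;> ring
  have hJv : jacobi A (stdb 1 + stdb 2) = Mv α := by
    ext i j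
    show eps i * A (stdb j) (stdb 1 + stdb 2) (stdb 1 + stdb 2) (stdb i) = Mv α i j
    rw [haddeq, e1, hcomp, hcomp, hcomp, hcomp]
    fin_cases i <;> fin_cases j <;>
      simp only [Fin.zero_eta, Fin.reduceFinMk, Fin.isValue] <;>
      simp only [TypeIIIComp, eps, Mv, q, ← hs2, Matrix.of_apply, Matrix.cons_val, Fin.isValue] <;> ring
  refine ⟨by rw [hJu]; exact rank_Mu α, by rw [hJv]; exact rank_Mv α, ?_⟩
  intro hNJO
  have hu0 : (stdb 1 - stdb 2 : V4) ≠ 0 := by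
    intro h
    have := congrFun h 1
    simp [stdb] at this
  have hv0 : (stdb 1 + stdb 2 : V4) ≠ 0 := by
    intro h
    have := congrFun h 1
    simp [stdb] at this
  have hnu : nip (stdb 1 - stdb 2) (stdb 1 - stdb 2) = 0 := by
    simp [nip, stdb]
  have hnv : nip (stdb 1 + stdb 2) (stdb 1 + stdb 2) = 0 := by
    simp [nip, stdb]
  obtain ⟨L, hL, hcommL⟩ := hNJO _ _ hu0 hv0 hnu hnv
  have hr : (jacobi A (stdb 1 - stdb 2)).rank = (jacobi A (stdb 1 + stdb 2)).rank := by
    rw [← Matrix.rank_mul_eq_left_of_isUnit_det L _ hL, hcommL,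
      Matrix.rank_mul_eq_right_of_isUnit_det L _ hL]
  rw [hJu, hJv, rank_Mu α] at hr
  have := rank_Mv α
  omega
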